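/- arXiv:1407.1803 — 5 statements merged into one kernel-verified Lean document; each statement's English description precedes it below -/
import Mathlib

section
/- Conformity of the Bernstein multiplier set for linear friction threshold: let q ≥ 1, let F : ℝ → ℝ be affine, and let μ = (μ_n, μ_t) with μ_n(x) = ∑_{i=0}^q a_i B_{i,q}(x) where a_i ≥ 0 for all i, and μ_t(x) = ∑_{i=0}^q b_i B_{i,q}(x) where |b_i| ≤ F(i/q) for all i. Then for every v = (v_n, v_t) ∈ L²([0,1]; ℝ²) with v_n ≤ 0 almost everywhere on [0,1], one has ∫_0^1 (μ_n(x) v_n(x) + μ_t(x) v_t(x)) dx ≤ ∫_0^1 F(x) |v_t(x)| dx. -/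
open MeasureTheory

lemma bernstein_sum_one (q : ℕ) (x : ℝ) :
    ∑ i ∈ Finset.range (q+1), (q.choose i : ℝ) * x ^ i * (1-x) ^ (q-i) = 1 := by
  have h := add_pow x (1-x) q
  simp only [add_sub_cancel, one_pow] at h
  conv_rhs => rw [h]
  exact Finset.sum_congr rfl fun i hi => by ring

lemma bernstein_sum_fst_moment (q : ℕ) (x : ℝ) :
    ∑ i ∈ Finset.range (q+1), (i : ℝ) * ((q.choose i : ℝ) * x ^ i * (1-x) ^ (q-i))
      = q * x := by
  have h := congrArg (Polynomial.eval x) (bernsteinPolynomial.sum_smul ℝ q)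
  simpa [bernsteinPolynomial, Polynomial.eval_finset_sum, mul_comm, mul_assoc,
    mul_left_comm] using h

/-- Conformity of the Bernstein multiplier set for a linear friction threshold
`F x = F₀ + F₁ * x`: if `μ = (μₙ, μₜ)` has Bernstein coefficients with `aᵢ ≥ 0` and
`|bᵢ| ≤ F(i/q)`, then for every `v = (vₙ, vₜ) ∈ L²([0,1]; ℝ²)` with `vₙ ≤ 0` a.e. one has
`∫ (μₙ vₙ + μₜ vₜ) ≤ ∫ F |vₜ|`. -/
theorem bernstein_multiplier_conforming
    (q : ℕ) (hq : 1 ≤ q) (F₀ F₁ : ℝ) (a b : ℕ → ℝ)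
    (ha : ∀ i ≤ q, 0 ≤ a i)
    (hb : ∀ i ≤ q, |b i| ≤ F₀ + F₁ * ((i : ℝ) / (q : ℝ)))
    (vn vt : ℝ → ℝ)
    (hvn : MemLp vn 2 (volume.restrict (Set.Icc (0 : ℝ) 1)))
    (hvt : MemLp vt 2 (volume.restrict (Set.Icc (0 : ℝ) 1)))
    (hvn_le : ∀ᵐ x ∂(volume.restrict (Set.Icc (0 : ℝ) 1)), vn x ≤ 0) :
    ∫ x in Set.Icc (0 : ℝ) 1,
        ((∑ i ∈ Finset.range (q + 1),
            a i * (q.choose i : ℝ) * x ^ i * (1 - x) ^ (q - i)) * vn x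
          + (∑ i ∈ Finset.range (q + 1),
            b i * (q.choose i : ℝ) * x ^ i * (1 - x) ^ (q - i)) * vt x)
      ≤ ∫ x in Set.Icc (0 : ℝ) 1, (F₀ + F₁ * x) * |vt x| := by
  set μ := volume.restrict (Set.Icc (0 : ℝ) 1) with hμ
  haveI : IsFiniteMeasure μ := by
    constructor
    rw [hμ, Measure.restrict_apply_univ]
    simp [Real.volume_Icc]
  set P : ℝ → ℝ := fun x => ∑ i ∈ Finset.range (q + 1),
      a i * (q.choose i : ℝ) * x ^ i * (1 - x) ^ (q - i) with hP
  set Q : ℝ → ℝ := fun x => ∑ i ∈ Finset.range (q + 1),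
      b i * (q.choose i : ℝ) * x ^ i * (1 - x) ^ (q - i) with hQ
  have hPc : Continuous P := by fun_prop
  have hQc : Continuous Q := by fun_prop
  have hRc : Continuous (fun x : ℝ => F₀ + F₁ * x) := by fun_prop
  have hqR : (q : ℝ) ≠ 0 := Nat.cast_ne_zero.2 (by omega)
  have hvn1 : Integrable vn μ := hvn.integrable (by norm_num)
  have hvt1 : Integrable vt μ := hvt.integrable (by norm_num)
  -- integrability of the left integrand
  obtain ⟨C₁, hC₁⟩ := isCompact_Icc.exists_bound_of_continuousOn
    (f := P) hPc.continuousOn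
  obtain ⟨C₂, hC₂⟩ := isCompact_Icc.exists_bound_of_continuousOn
    (f := Q) hQc.continuousOn
  obtain ⟨C₃, hC₃⟩ := isCompact_Icc.exists_bound_of_continuousOn
    (f := fun x : ℝ => F₀ + F₁ * x) hRc.continuousOn
  have hmem : ∀ᵐ x ∂μ, x ∈ Set.Icc (0 : ℝ) 1 := ae_restrict_mem measurableSet_Icc
  have h1 : Integrable (fun x => P x * vn x) μ :=
    hvn1.bdd_mul hPc.aestronglyMeasurable (hmem.mono fun x hx => hC₁ x hx)
  have h2 : Integrable (fun x => Q x * vt x) μ :=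
    hvt1.bdd_mul hQc.aestronglyMeasurable (hmem.mono fun x hx => hC₂ x hx)
  have hL : Integrable (fun x => P x * vn x + Q x * vt x) μ := h1.add h2
  have hR : Integrable (fun x => (F₀ + F₁ * x) * |vt x|) μ :=
    hvt1.abs.bdd_mul hRc.aestronglyMeasurable (hmem.mono fun x hx => hC₃ x hx)
  refine integral_mono_ae hL hR ?_
  filter_upwards [hvn_le, hmem] with x hvx hxS
  have hx0 : (0 : ℝ) ≤ x := hxS.1
  have hx1 : (0 : ℝ) ≤ 1 - x := by linarith [hxS.2]
  have hB : ∀ i, 0 ≤ (q.choose i : ℝ) * x ^ i * (1 - x) ^ (q - i) := fun i =>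
    mul_nonneg (mul_nonneg (Nat.cast_nonneg _) (pow_nonneg hx0 _)) (pow_nonneg hx1 _)
  -- first term is nonpositive
  have hPnn : 0 ≤ P x := by
    refine Finset.sum_nonneg fun i hi => ?_
    have hiq : i ≤ q := Nat.lt_succ_iff.mp (Finset.mem_range.mp hi)
    have := hB i
    have := ha i hiq
    nlinarith [hB i, ha i hiq]
  have hterm1 : P x * vn x ≤ 0 := mul_nonpos_of_nonneg_of_nonpos hPnn hvx
  -- second term bounded
  have hQabs : |Q x| ≤ F₀ + F₁ * x := by
    have step1 : |Q x| ≤ ∑ i ∈ Finset.range (q + 1),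
        |b i| * ((q.choose i : ℝ) * x ^ i * (1 - x) ^ (q - i)) := by
      refine (Finset.abs_sum_le_sum_abs _ _).trans (le_of_eq ?_)
      refine Finset.sum_congr rfl fun i hi => ?_
      rw [abs_mul, abs_mul, abs_mul, abs_of_nonneg (pow_nonneg hx0 _),
        abs_of_nonneg (pow_nonneg hx1 _), abs_of_nonneg (Nat.cast_nonneg (α := ℝ) _)]
      ring
    have step2 : ∑ i ∈ Finset.range (q + 1),
        |b i| * ((q.choose i : ℝ) * x ^ i * (1 - x) ^ (q - i))
        ≤ ∑ i ∈ Finset.range (q + 1),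
        (F₀ + F₁ * ((i : ℝ) / (q : ℝ))) * ((q.choose i : ℝ) * x ^ i * (1 - x) ^ (q - i)) := by
      refine Finset.sum_le_sum fun i hi => ?_
      exact mul_le_mul_of_nonneg_right
        (hb i (Nat.lt_succ_iff.mp (Finset.mem_range.mp hi))) (hB i)
    have step3 : ∑ i ∈ Finset.range (q + 1),
        (F₀ + F₁ * ((i : ℝ) / (q : ℝ))) * ((q.choose i : ℝ) * x ^ i * (1 - x) ^ (q - i))
        = F₀ + F₁ * x := by
      have e1 := bernstein_sum_one q x
      have e2 := bernstein_sum_fst_moment q x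
      have : ∑ i ∈ Finset.range (q + 1),
          (F₀ + F₁ * ((i : ℝ) / (q : ℝ))) * ((q.choose i : ℝ) * x ^ i * (1 - x) ^ (q - i))
          = F₀ * ∑ i ∈ Finset.range (q + 1), (q.choose i : ℝ) * x ^ i * (1 - x) ^ (q - i)
            + (F₁ / q) * ∑ i ∈ Finset.range (q + 1),
              (i : ℝ) * ((q.choose i : ℝ) * x ^ i * (1 - x) ^ (q - i)) := by
        rw [Finset.mul_sum, Finset.mul_sum, ← Finset.sum_add_distrib]
        refine Finset.sum_congr rfl fun i hi => ?_
        field_simp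
      rw [this, e1, e2]
      field_simp
    linarith [step1.trans step2, step3.symm.le]
  have hterm2 : Q x * vt x ≤ (F₀ + F₁ * x) * |vt x| := by
    calc Q x * vt x ≤ |Q x * vt x| := le_abs_self _
      _ = |Q x| * |vt x| := abs_mul _ _
      _ ≤ (F₀ + F₁ * x) * |vt x| := mul_le_mul_of_nonneg_right hQabs (abs_nonneg _)
  linarith
end

section
/- Uniqueness for the abstract stabilized mixed problem: assume the stabilized coercivity assumption holds with some α > 0. If (u₁, λ₁) ∈ V × M and (u₂, λ₂) ∈ V × M both solve the abstract stabilized mixed problem (i)–(ii), then u₁ = u₂ in V and λ₁ = λ₂ almost everywhere on Ω. -/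
open MeasureTheory

lemma mulL2' {Ω : Type*} [MeasurableSpace Ω] {m : Measure Ω} {f g : Ω → ℝ}
    (hf : MemLp f 2 m) (hg : MemLp g 2 m) :
    Integrable (fun ω => f ω * g ω) m := by
  have h : MemLp (f • g) 1 m :=
    hg.smul hf (hpqr := ⟨by simp only [one_div, inv_one]; rw [ENNReal.inv_two_add_inv_two]⟩)
  exact memLp_one_iff_integrable.mp h

lemma fstL2' {Ω : Type*} [MeasurableSpace Ω] {m : Measure Ω} {f : Ω → ℝ × ℝ}
    (hf : MemLp f 2 m) : MemLp (fun ω => (f ω).1) 2 m :=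
  (ContinuousLinearMap.fst ℝ ℝ ℝ).comp_memLp' hf

lemma sndL2' {Ω : Type*} [MeasurableSpace Ω] {m : Measure Ω} {f : Ω → ℝ × ℝ}
    (hf : MemLp f 2 m) : MemLp (fun ω => (f ω).2) 2 m :=
  (ContinuousLinearMap.snd ℝ ℝ ℝ).comp_memLp' hf

lemma bddMul' {Ω : Type*} [MeasurableSpace Ω] {m : Measure Ω} {γ f : Ω → ℝ}
    (hγ : MemLp γ ⊤ m) (hf : Integrable f m) :
    Integrable (fun ω => γ ω * f ω) m :=
  hf.smul_of_top_right hγ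

set_option maxHeartbeats 2000000 in
/-- Uniqueness for the abstract stabilized mixed problem: under the stabilized coercivity
assumption, two solutions `(u₁, l₁)` and `(u₂, l₂)` of the abstract stabilized mixed
problem (i)–(ii) coincide: `u₁ = u₂` in `V` and `l₁ = l₂` almost everywhere on `Ω`. -/
theorem stabilized_mixed_uniqueness
    {Ω : Type*} [MeasurableSpace Ω] (m : Measure Ω)
    (γ : Ω → ℝ) (hγ : MemLp γ ⊤ m) (hγpos : ∀ᵐ ω ∂m, 0 < γ ω)
    {V : Type*} [NormedAddCommGroup V] [InnerProductSpace ℝ V]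
    (τ T : V →ₗ[ℝ] Ω → ℝ × ℝ)
    (hτ : ∀ v : V, MemLp (τ v) 2 m) (hT : ∀ v : V, MemLp (T v) 2 m)
    (a : V →ₗ[ℝ] V →ₗ[ℝ] ℝ) (L : V →ₗ[ℝ] ℝ)
    (g : Ω → ℝ) (hg : MemLp g 2 m)
    (M : Set (Ω → ℝ × ℝ)) (hM : ∀ μ ∈ M, MemLp μ 2 m)
    (α : ℝ) (hα : 0 < α)
    (hcoer : ∀ v : V,
      α * ‖v‖ ^ 2 ≤ a v v - ∫ ω, γ ω * ((T v ω).1 ^ 2 + (T v ω).2 ^ 2) ∂m)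
    (u₁ u₂ : V) (l₁ l₂ : Ω → ℝ × ℝ) (hl₁ : l₁ ∈ M) (hl₂ : l₂ ∈ M)
    (h₁eq : ∀ v : V,
      a u₁ v + (∫ ω, ((l₁ ω).1 * (τ v ω).1 + (l₁ ω).2 * (τ v ω).2) ∂m)
        - (∫ ω, γ ω * (((l₁ ω).1 + (T u₁ ω).1) * (T v ω).1
            + ((l₁ ω).2 + (T u₁ ω).2) * (T v ω).2) ∂m) = L v)
    (h₁ineq : ∀ μ ∈ M,
      (∫ ω, (((μ ω).1 - (l₁ ω).1) * (τ u₁ ω).1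
          + ((μ ω).2 - (l₁ ω).2) * (τ u₁ ω).2) ∂m)
        - (∫ ω, γ ω * (((μ ω).1 - (l₁ ω).1) * ((l₁ ω).1 + (T u₁ ω).1)
            + ((μ ω).2 - (l₁ ω).2) * ((l₁ ω).2 + (T u₁ ω).2)) ∂m)
      ≤ ∫ ω, g ω * ((μ ω).1 - (l₁ ω).1) ∂m)
    (h₂eq : ∀ v : V,
      a u₂ v + (∫ ω, ((l₂ ω).1 * (τ v ω).1 + (l₂ ω).2 * (τ v ω).2) ∂m)
        - (∫ ω, γ ω * (((l₂ ω).1 + (T u₂ ω).1) * (T v ω).1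
            + ((l₂ ω).2 + (T u₂ ω).2) * (T v ω).2) ∂m) = L v)
    (h₂ineq : ∀ μ ∈ M,
      (∫ ω, (((μ ω).1 - (l₂ ω).1) * (τ u₂ ω).1
          + ((μ ω).2 - (l₂ ω).2) * (τ u₂ ω).2) ∂m)
        - (∫ ω, γ ω * (((μ ω).1 - (l₂ ω).1) * ((l₂ ω).1 + (T u₂ ω).1)
            + ((μ ω).2 - (l₂ ω).2) * ((l₂ ω).2 + (T u₂ ω).2)) ∂m)
      ≤ ∫ ω, g ω * ((μ ω).1 - (l₂ ω).1) ∂m) :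
    u₁ = u₂ ∧ l₁ =ᵐ[m] l₂ := by
  have hl1 := hM l₁ hl₁
  have hl2 := hM l₂ hl₂
  have l11 := fstL2' hl1; have l12 := sndL2' hl1
  have l21 := fstL2' hl2; have l22 := sndL2' hl2
  have τ11 := fstL2' (hτ u₁); have τ12 := sndL2' (hτ u₁)
  have τ21 := fstL2' (hτ u₂); have τ22 := sndL2' (hτ u₂)
  have T11 := fstL2' (hT u₁); have T12 := sndL2' (hT u₁)
  have T21 := fstL2' (hT u₂); have T22 := sndL2' (hT u₂)
  have d1 := l11.sub l21; have d2 := l12.sub l22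
  have t1 := T11.sub T21; have t2 := T12.sub T22
  have s1 := τ11.sub τ21; have s2 := τ12.sub τ22
  have a11 := l11.add T11; have a12 := l12.add T12
  have a21 := l21.add T21; have a22 := l22.add T22
  -- integrability facts
  have hX1 : Integrable (fun ω => (l₁ ω).1 * ((τ u₁ ω).1 - (τ u₂ ω).1)
      + (l₁ ω).2 * ((τ u₁ ω).2 - (τ u₂ ω).2)) m :=
    (mulL2' l11 s1).add (mulL2' l12 s2)
  have hX2 : Integrable (fun ω => (l₂ ω).1 * ((τ u₁ ω).1 - (τ u₂ ω).1)
      + (l₂ ω).2 * ((τ u₁ ω).2 - (τ u₂ ω).2)) m :=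
    (mulL2' l21 s1).add (mulL2' l22 s2)
  have hY1 : Integrable (fun ω => γ ω * (((l₁ ω).1 + (T u₁ ω).1) * ((T u₁ ω).1 - (T u₂ ω).1)
      + ((l₁ ω).2 + (T u₁ ω).2) * ((T u₁ ω).2 - (T u₂ ω).2))) m :=
    bddMul' hγ ((mulL2' a11 t1).add (mulL2' a12 t2))
  have hY2 : Integrable (fun ω => γ ω * (((l₂ ω).1 + (T u₂ ω).1) * ((T u₁ ω).1 - (T u₂ ω).1)
      + ((l₂ ω).2 + (T u₂ ω).2) * ((T u₁ ω).2 - (T u₂ ω).2))) m :=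
    bddMul' hγ ((mulL2' a21 t1).add (mulL2' a22 t2))
  have hI2 : Integrable (fun ω => γ ω * (((l₁ ω).1 - (l₂ ω).1) * ((T u₁ ω).1 - (T u₂ ω).1)
      + ((l₁ ω).2 - (l₂ ω).2) * ((T u₁ ω).2 - (T u₂ ω).2))) m :=
    bddMul' hγ ((mulL2' d1 t1).add (mulL2' d2 t2))
  have hI3 : Integrable (fun ω => γ ω * (((T u₁ ω).1 - (T u₂ ω).1) ^ 2
      + ((T u₁ ω).2 - (T u₂ ω).2) ^ 2)) m := by
    simpa only [pow_two, Pi.add_apply, Pi.sub_apply] using bddMul' hγ ((mulL2' t1 t1).add (mulL2' t2 t2))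
  have hI4 : Integrable (fun ω => γ ω * (((l₁ ω).1 - (l₂ ω).1) ^ 2
      + ((l₁ ω).2 - (l₂ ω).2) ^ 2)) m := by
    simpa only [pow_two, Pi.add_apply, Pi.sub_apply] using bddMul' hγ ((mulL2' d1 d1).add (mulL2' d2 d2))
  have hP1 : Integrable (fun ω => ((l₂ ω).1 - (l₁ ω).1) * (τ u₁ ω).1
      + ((l₂ ω).2 - (l₁ ω).2) * (τ u₁ ω).2) m :=
    (mulL2' (l21.sub l11) τ11).add (mulL2' (l22.sub l12) τ12)
  have hP2 : Integrable (fun ω => ((l₁ ω).1 - (l₂ ω).1) * (τ u₂ ω).1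
      + ((l₁ ω).2 - (l₂ ω).2) * (τ u₂ ω).2) m :=
    (mulL2' d1 τ21).add (mulL2' d2 τ22)
  have hQ1 : Integrable (fun ω => γ ω * (((l₂ ω).1 - (l₁ ω).1) * ((l₁ ω).1 + (T u₁ ω).1)
      + ((l₂ ω).2 - (l₁ ω).2) * ((l₁ ω).2 + (T u₁ ω).2))) m :=
    bddMul' hγ ((mulL2' (l21.sub l11) a11).add (mulL2' (l22.sub l12) a12))
  have hQ2 : Integrable (fun ω => γ ω * (((l₁ ω).1 - (l₂ ω).1) * ((l₂ ω).1 + (T u₂ ω).1)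
      + ((l₁ ω).2 - (l₂ ω).2) * ((l₂ ω).2 + (T u₂ ω).2))) m :=
    bddMul' hγ ((mulL2' d1 a21).add (mulL2' d2 a22))
  -- specialize the hypotheses
  have e1 := h₁eq (u₁ - u₂)
  have e2 := h₂eq (u₁ - u₂)
  have hc := hcoer (u₁ - u₂)
  simp only [map_sub, LinearMap.sub_apply, Pi.sub_apply, Prod.fst_sub, Prod.snd_sub]
    at e1 e2 hc
  have i1 := h₁ineq l₂ hl₂
  have i2 := h₂ineq l₁ hl₁
  -- combine the integrals
  have hA : (∫ ω, ((l₁ ω).1 * ((τ u₁ ω).1 - (τ u₂ ω).1)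
        + (l₁ ω).2 * ((τ u₁ ω).2 - (τ u₂ ω).2)) ∂m)
      - (∫ ω, ((l₂ ω).1 * ((τ u₁ ω).1 - (τ u₂ ω).1)
        + (l₂ ω).2 * ((τ u₁ ω).2 - (τ u₂ ω).2)) ∂m)
      = ∫ ω, (((l₁ ω).1 - (l₂ ω).1) * ((τ u₁ ω).1 - (τ u₂ ω).1)
        + ((l₁ ω).2 - (l₂ ω).2) * ((τ u₁ ω).2 - (τ u₂ ω).2)) ∂m := by
    rw [← integral_sub hX1 hX2]
    exact integral_congr_ae (Filter.Eventually.of_forall fun ω => by ring)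
  have hB : (∫ ω, γ ω * (((l₁ ω).1 + (T u₁ ω).1) * ((T u₁ ω).1 - (T u₂ ω).1)
        + ((l₁ ω).2 + (T u₁ ω).2) * ((T u₁ ω).2 - (T u₂ ω).2)) ∂m)
      - (∫ ω, γ ω * (((l₂ ω).1 + (T u₂ ω).1) * ((T u₁ ω).1 - (T u₂ ω).1)
        + ((l₂ ω).2 + (T u₂ ω).2) * ((T u₁ ω).2 - (T u₂ ω).2)) ∂m)
      = (∫ ω, γ ω * (((l₁ ω).1 - (l₂ ω).1) * ((T u₁ ω).1 - (T u₂ ω).1)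
        + ((l₁ ω).2 - (l₂ ω).2) * ((T u₁ ω).2 - (T u₂ ω).2)) ∂m)
      + (∫ ω, γ ω * (((T u₁ ω).1 - (T u₂ ω).1) ^ 2
        + ((T u₁ ω).2 - (T u₂ ω).2) ^ 2) ∂m) := by
    rw [← integral_sub hY1 hY2, ← integral_add hI2 hI3]
    exact integral_congr_ae (Filter.Eventually.of_forall fun ω => by ring)
  have hP : (∫ ω, (((l₂ ω).1 - (l₁ ω).1) * (τ u₁ ω).1
        + ((l₂ ω).2 - (l₁ ω).2) * (τ u₁ ω).2) ∂m)
      + (∫ ω, (((l₁ ω).1 - (l₂ ω).1) * (τ u₂ ω).1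
        + ((l₁ ω).2 - (l₂ ω).2) * (τ u₂ ω).2) ∂m)
      = -∫ ω, (((l₁ ω).1 - (l₂ ω).1) * ((τ u₁ ω).1 - (τ u₂ ω).1)
        + ((l₁ ω).2 - (l₂ ω).2) * ((τ u₁ ω).2 - (τ u₂ ω).2)) ∂m := by
    rw [← integral_add hP1 hP2, ← integral_neg]
    exact integral_congr_ae (Filter.Eventually.of_forall fun ω => by ring)
  have hQ : (∫ ω, γ ω * (((l₂ ω).1 - (l₁ ω).1) * ((l₁ ω).1 + (T u₁ ω).1)
        + ((l₂ ω).2 - (l₁ ω).2) * ((l₁ ω).2 + (T u₁ ω).2)) ∂m)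
      + (∫ ω, γ ω * (((l₁ ω).1 - (l₂ ω).1) * ((l₂ ω).1 + (T u₂ ω).1)
        + ((l₁ ω).2 - (l₂ ω).2) * ((l₂ ω).2 + (T u₂ ω).2)) ∂m)
      = -((∫ ω, γ ω * (((l₁ ω).1 - (l₂ ω).1) ^ 2 + ((l₁ ω).2 - (l₂ ω).2) ^ 2) ∂m)
        + (∫ ω, γ ω * (((l₁ ω).1 - (l₂ ω).1) * ((T u₁ ω).1 - (T u₂ ω).1)
          + ((l₁ ω).2 - (l₂ ω).2) * ((T u₁ ω).2 - (T u₂ ω).2)) ∂m)) := by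
    rw [← integral_add hQ1 hQ2, ← integral_add hI4 hI2, ← integral_neg]
    exact integral_congr_ae (Filter.Eventually.of_forall fun ω => by ring)
  have hR : (∫ ω, g ω * ((l₂ ω).1 - (l₁ ω).1) ∂m)
      = -∫ ω, g ω * ((l₁ ω).1 - (l₂ ω).1) ∂m := by
    rw [← integral_neg]
    exact integral_congr_ae (Filter.Eventually.of_forall fun ω => by ring)
  have haep : 0 ≤ᵐ[m] fun ω =>
      γ ω * (((l₁ ω).1 - (l₂ ω).1) ^ 2 + ((l₁ ω).2 - (l₂ ω).2) ^ 2) := by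
    filter_upwards [hγpos] with ω h
    simp only [Pi.zero_apply]
    nlinarith [sq_nonneg ((l₁ ω).1 - (l₂ ω).1), sq_nonneg ((l₁ ω).2 - (l₂ ω).2)]
  have h4 : 0 ≤ ∫ ω, γ ω * (((l₁ ω).1 - (l₂ ω).1) ^ 2 + ((l₁ ω).2 - (l₂ ω).2) ^ 2) ∂m :=
    integral_nonneg_of_ae haep
  set J1 := ∫ ω, ((l₁ ω).1 * ((τ u₁ ω).1 - (τ u₂ ω).1)
    + (l₁ ω).2 * ((τ u₁ ω).2 - (τ u₂ ω).2)) ∂m with hJ1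
  set J2 := ∫ ω, ((l₂ ω).1 * ((τ u₁ ω).1 - (τ u₂ ω).1)
    + (l₂ ω).2 * ((τ u₁ ω).2 - (τ u₂ ω).2)) ∂m with hJ2
  set J3 := ∫ ω, γ ω * (((l₁ ω).1 + (T u₁ ω).1) * ((T u₁ ω).1 - (T u₂ ω).1)
    + ((l₁ ω).2 + (T u₁ ω).2) * ((T u₁ ω).2 - (T u₂ ω).2)) ∂m with hJ3
  set J4 := ∫ ω, γ ω * (((l₂ ω).1 + (T u₂ ω).1) * ((T u₁ ω).1 - (T u₂ ω).1)
    + ((l₂ ω).2 + (T u₂ ω).2) * ((T u₁ ω).2 - (T u₂ ω).2)) ∂m with hJ4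
  set J5 := ∫ ω, (((l₁ ω).1 - (l₂ ω).1) * ((τ u₁ ω).1 - (τ u₂ ω).1)
    + ((l₁ ω).2 - (l₂ ω).2) * ((τ u₁ ω).2 - (τ u₂ ω).2)) ∂m with hJ5
  set J6 := ∫ ω, γ ω * (((l₁ ω).1 - (l₂ ω).1) * ((T u₁ ω).1 - (T u₂ ω).1)
    + ((l₁ ω).2 - (l₂ ω).2) * ((T u₁ ω).2 - (T u₂ ω).2)) ∂m with hJ6
  set J7 := ∫ ω, γ ω * (((T u₁ ω).1 - (T u₂ ω).1) ^ 2
    + ((T u₁ ω).2 - (T u₂ ω).2) ^ 2) ∂m with hJ7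
  set J8 := ∫ ω, γ ω * (((l₁ ω).1 - (l₂ ω).1) ^ 2 + ((l₁ ω).2 - (l₂ ω).2) ^ 2) ∂m with hJ8
  set J9 := ∫ ω, (((l₂ ω).1 - (l₁ ω).1) * (τ u₁ ω).1
    + ((l₂ ω).2 - (l₁ ω).2) * (τ u₁ ω).2) ∂m with hJ9
  set J10 := ∫ ω, (((l₁ ω).1 - (l₂ ω).1) * (τ u₂ ω).1
    + ((l₁ ω).2 - (l₂ ω).2) * (τ u₂ ω).2) ∂m with hJ10
  set J11 := ∫ ω, γ ω * (((l₂ ω).1 - (l₁ ω).1) * ((l₁ ω).1 + (T u₁ ω).1)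
    + ((l₂ ω).2 - (l₁ ω).2) * ((l₁ ω).2 + (T u₁ ω).2)) ∂m with hJ11
  set J12 := ∫ ω, γ ω * (((l₁ ω).1 - (l₂ ω).1) * ((l₂ ω).1 + (T u₂ ω).1)
    + ((l₁ ω).2 - (l₂ ω).2) * ((l₂ ω).2 + (T u₂ ω).2)) ∂m with hJ12
  set J13 := ∫ ω, g ω * ((l₂ ω).1 - (l₁ ω).1) ∂m with hJ13
  set J14 := ∫ ω, g ω * ((l₁ ω).1 - (l₂ ω).1) ∂m with hJ14
  clear_value J1 J2 J3 J4 J5 J6 J7 J8 J9 J10 J11 J12 J13 J14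
  have key : α * ‖u₁ - u₂‖ ^ 2 + J8 ≤ 0 := by
    linarith [e1, e2, i1, i2, hA, hB, hP, hQ, hR, hc]
  have hnsq : ‖u₁ - u₂‖ ^ 2 = 0 := by
    nlinarith [sq_nonneg ‖u₁ - u₂‖]
  have huv : u₁ = u₂ := by
    have h0 : ‖u₁ - u₂‖ = 0 := by nlinarith [norm_nonneg (u₁ - u₂)]
    exact sub_eq_zero.mp (norm_eq_zero.mp h0)
  refine ⟨huv, ?_⟩
  have hI40 : J8 = 0 := by
    have hz : α * ‖u₁ - u₂‖ ^ 2 = 0 := by rw [hnsq, mul_zero]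
    linarith [key, h4]
  have hae0 := (integral_eq_zero_iff_of_nonneg_ae haep hI4).mp (hJ8 ▸ hI40)
  filter_upwards [hae0, hγpos] with ω h0 hpos
  simp only [Pi.zero_apply] at h0
  have hs : ((l₁ ω).1 - (l₂ ω).1) ^ 2 + ((l₁ ω).2 - (l₂ ω).2) ^ 2 = 0 := by
    rcases mul_eq_zero.mp h0 with h | h
    · exact absurd h (ne_of_gt hpos)
    · exact h
  have h1 : (l₁ ω).1 = (l₂ ω).1 := by
    nlinarith [sq_nonneg ((l₁ ω).1 - (l₂ ω).1), sq_nonneg ((l₁ ω).2 - (l₂ ω).2)]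
  have h2 : (l₁ ω).2 = (l₂ ω).2 := by
    nlinarith [sq_nonneg ((l₁ ω).1 - (l₂ ω).1), sq_nonneg ((l₁ ω).2 - (l₂ ω).2)]
  exact Prod.ext h1 h2
end

section
/- Saddle point characterization of the abstract stabilized mixed problem: assume a is symmetric, M is convex, and the stabilized coercivity assumption holds with some α > 0. Define the Lagrangian L_γ(v, μ) := (1/2) a(v, v) − L(v) + ∫_Ω ⟨μ, τv⟩ dm − ∫_Ω g μ_n dm − (1/2) ∫_Ω γ |μ + Tv|² dm for v ∈ V, μ ∈ M. Then (u, λ) ∈ V × M solves the abstract stabilized mixed problem (i)–(ii) if and only if (u, λ) is a saddle point, i.e. L_γ(u, μ) ≤ L_γ(u, λ) ≤ L_γ(v, λ) for all v ∈ V and all μ ∈ M. -/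
open MeasureTheory

/-- The stabilized Lagrangian
`L_γ(v, μ) = ½ a(v,v) − L(v) + ∫ ⟨μ, τv⟩ dm − ∫ g μₙ dm − ½ ∫ γ |μ + Tv|² dm`. -/
noncomputable def stabilizedLagrangian
    {Ω : Type*} [MeasurableSpace Ω] (m : Measure Ω) (γ : Ω → ℝ)
    {V : Type*} [NormedAddCommGroup V] [InnerProductSpace ℝ V]
    (τ T : V →ₗ[ℝ] Ω → ℝ × ℝ)
    (a : V →ₗ[ℝ] V →ₗ[ℝ] ℝ) (L : V →ₗ[ℝ] ℝ) (g : Ω → ℝ)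
    (v : V) (μ : Ω → ℝ × ℝ) : ℝ :=
  (1 / 2) * a v v - L v
    + (∫ ω, ((μ ω).1 * (τ v ω).1 + (μ ω).2 * (τ v ω).2) ∂m)
    - (∫ ω, g ω * (μ ω).1 ∂m)
    - (1 / 2) * ∫ ω, γ ω * (((μ ω).1 + (T v ω).1) ^ 2 + ((μ ω).2 + (T v ω).2) ^ 2) ∂m

namespace SaddleAux

open scoped ENNReal NNReal

variable {Ω : Type*} [MeasurableSpace Ω] {m : Measure Ω} {γ g : Ω → ℝ}
  {f f' h h' : Ω → ℝ × ℝ}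

/-- `∫ ⟨f, h⟩`. -/
noncomputable def PP (m : Measure Ω) (f h : Ω → ℝ × ℝ) : ℝ :=
  ∫ ω, ((f ω).1 * (h ω).1 + (f ω).2 * (h ω).2) ∂m

/-- `∫ γ ⟨f, h⟩`. -/
noncomputable def BB (m : Measure Ω) (γ : Ω → ℝ) (f h : Ω → ℝ × ℝ) : ℝ :=
  ∫ ω, γ ω * ((f ω).1 * (h ω).1 + (f ω).2 * (h ω).2) ∂m

/-- `∫ g fₙ`. -/
noncomputable def GG (m : Measure Ω) (g : Ω → ℝ) (f : Ω → ℝ × ℝ) : ℝ :=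
  ∫ ω, g ω * (f ω).1 ∂m

lemma memfst (hf : MemLp f 2 m) : MemLp (fun ω => (f ω).1) 2 m :=
  (ContinuousLinearMap.fst ℝ ℝ ℝ).comp_memLp' hf

lemma memsnd (hf : MemLp f 2 m) : MemLp (fun ω => (f ω).2) 2 m :=
  (ContinuousLinearMap.snd ℝ ℝ ℝ).comp_memLp' hf

lemma intmul {a b : Ω → ℝ} (ha : MemLp a 2 m) (hb : MemLp b 2 m) :
    Integrable (fun ω => a ω * b ω) m := by
  have h2 : Integrable (fun ω => (1 / 2 : ℝ) * (a ω ^ 2 + b ω ^ 2)) m :=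
    (ha.integrable_sq.add hb.integrable_sq).const_mul _
  refine h2.mono' (ha.aestronglyMeasurable.mul hb.aestronglyMeasurable) ?_
  filter_upwards with ω
  rw [Real.norm_eq_abs, abs_mul]
  nlinarith [sq_nonneg (|a ω| - |b ω|), sq_abs (a ω), sq_abs (b ω),
    abs_nonneg (a ω), abs_nonneg (b ω)]

lemma intdot (hf : MemLp f 2 m) (hh : MemLp h 2 m) :
    Integrable (fun ω => (f ω).1 * (h ω).1 + (f ω).2 * (h ω).2) m :=
  (intmul (memfst hf) (memfst hh)).add (intmul (memsnd hf) (memsnd hh))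

lemma intgdot (hγ : MemLp γ ⊤ m) (hf : MemLp f 2 m) (hh : MemLp h 2 m) :
    Integrable (fun ω => γ ω * ((f ω).1 * (h ω).1 + (f ω).2 * (h ω).2)) m := by
  refine (intdot hf hh).bdd_mul (c := (eLpNormEssSup γ m).toReal)
    hγ.aestronglyMeasurable ?_
  have h1 : ∀ᵐ ω ∂m, (‖γ ω‖₊ : ℝ≥0∞) ≤ eLpNormEssSup γ m := ae_le_eLpNormEssSup
  have hfin : eLpNormEssSup γ m ≠ ⊤ := by
    have h2 := hγ.2
    rw [eLpNorm_exponent_top] at h2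
    exact h2.ne
  filter_upwards [h1] with ω hω
  have h3 := ENNReal.toReal_mono hfin hω
  simpa using h3

lemma PP_symm : PP m f h = PP m h f :=
  integral_congr_ae (.of_forall fun ω => by ring)

lemma BB_symm : BB m γ f h = BB m γ h f :=
  integral_congr_ae (.of_forall fun ω => by ring)

lemma PP_sub_left (hf : MemLp f 2 m) (hf' : MemLp f' 2 m) (hh : MemLp h 2 m) :
    PP m (f - f') h = PP m f h - PP m f' h := by
  unfold PP
  rw [← integral_sub (intdot hf hh) (intdot hf' hh)]
  refine integral_congr_ae (.of_forall fun ω => ?_)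
  simp only [Pi.sub_apply, Prod.fst_sub, Prod.snd_sub]
  ring

lemma PP_smul_left (c : ℝ) : PP m (c • f) h = c * PP m f h := by
  unfold PP
  rw [← integral_const_mul _ _]
  refine integral_congr_ae (.of_forall fun ω => ?_)
  simp only [Pi.smul_apply, Prod.smul_fst, Prod.smul_snd, smul_eq_mul]
  ring

lemma PP_add_right (hf : MemLp f 2 m) (hh : MemLp h 2 m) (hh' : MemLp h' 2 m) :
    PP m f (h + h') = PP m f h + PP m f h' := by
  unfold PP
  rw [← integral_add (intdot hf hh) (intdot hf hh')]
  refine integral_congr_ae (.of_forall fun ω => ?_)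
  simp only [Pi.add_apply, Prod.fst_add, Prod.snd_add]
  ring

lemma PP_smul_right (c : ℝ) : PP m f (c • h) = c * PP m f h := by
  rw [PP_symm, PP_smul_left, PP_symm]

lemma BB_sub_left (hγ : MemLp γ ⊤ m) (hf : MemLp f 2 m) (hf' : MemLp f' 2 m)
    (hh : MemLp h 2 m) :
    BB m γ (f - f') h = BB m γ f h - BB m γ f' h := by
  unfold BB
  rw [← integral_sub (intgdot hγ hf hh) (intgdot hγ hf' hh)]
  refine integral_congr_ae (.of_forall fun ω => ?_)
  simp only [Pi.sub_apply, Prod.fst_sub, Prod.snd_sub]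
  ring

lemma BB_smul_left (c : ℝ) : BB m γ (c • f) h = c * BB m γ f h := by
  unfold BB
  rw [← integral_const_mul _ _]
  refine integral_congr_ae (.of_forall fun ω => ?_)
  simp only [Pi.smul_apply, Prod.smul_fst, Prod.smul_snd, smul_eq_mul]
  ring

lemma BB_smul_right (c : ℝ) : BB m γ f (c • h) = c * BB m γ f h := by
  rw [BB_symm, BB_smul_left, BB_symm]

lemma GG_sub {g : Ω → ℝ} (hg : MemLp g 2 m) (hf : MemLp f 2 m) (hf' : MemLp f' 2 m) :
    GG m g (f - f') = GG m g f - GG m g f' := by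
  unfold GG
  rw [← integral_sub (intmul hg (memfst hf)) (intmul hg (memfst hf'))]
  refine integral_congr_ae (.of_forall fun ω => ?_)
  simp only [Pi.sub_apply, Prod.fst_sub]
  ring

lemma GG_smul {g : Ω → ℝ} (c : ℝ) : GG m g (c • f) = c * GG m g f := by
  unfold GG
  rw [← integral_const_mul _ _]
  refine integral_congr_ae (.of_forall fun ω => ?_)
  simp only [Pi.smul_apply, Prod.smul_fst, smul_eq_mul]
  ring

lemma BB_nonneg (hγpos : ∀ᵐ ω ∂m, 0 < γ ω) (f : Ω → ℝ × ℝ) : 0 ≤ BB m γ f f := by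
  refine integral_nonneg_of_ae ?_
  filter_upwards [hγpos] with ω hω
  have : 0 ≤ (f ω).1 * (f ω).1 + (f ω).2 * (f ω).2 := by
    nlinarith [mul_self_nonneg (f ω).1, mul_self_nonneg (f ω).2]
  exact mul_nonneg hω.le this

lemma BB_quad (hγ : MemLp γ ⊤ m) (hf : MemLp f 2 m) (hh : MemLp h 2 m) :
    BB m γ (f + h) (f + h) = BB m γ f f + 2 * BB m γ f h + BB m γ h h := by
  unfold BB
  have e : (fun ω => γ ω * (((f + h) ω).1 * ((f + h) ω).1 + ((f + h) ω).2 * ((f + h) ω).2))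
      = fun ω => γ ω * ((f ω).1 * (f ω).1 + (f ω).2 * (f ω).2)
        + (2 * (γ ω * ((f ω).1 * (h ω).1 + (f ω).2 * (h ω).2))
          + γ ω * ((h ω).1 * (h ω).1 + (h ω).2 * (h ω).2)) := by
    funext ω
    simp only [Pi.add_apply, Prod.fst_add, Prod.snd_add]
    ring
  have i23 : Integrable (fun ω => 2 * (γ ω * ((f ω).1 * (h ω).1 + (f ω).2 * (h ω).2))
      + γ ω * ((h ω).1 * (h ω).1 + (h ω).2 * (h ω).2)) m :=
    ((intgdot hγ hf hh).const_mul 2).add (intgdot hγ hh hh)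
  rw [e, integral_add (intgdot hγ hf hf) i23,
    integral_add ((intgdot hγ hf hh).const_mul 2) (intgdot hγ hh hh),
    integral_const_mul _ _]
  ring

lemma BB_self_eq : BB m γ f f = ∫ ω, γ ω * ((f ω).1 ^ 2 + (f ω).2 ^ 2) ∂m :=
  integral_congr_ae (.of_forall fun ω => by ring)

lemma PP_zero_right : PP m f 0 = 0 := by
  unfold PP; simp

lemma BB_zero_right : BB m γ f 0 = 0 := by
  unfold BB; simp

lemma lag_eq {V : Type*} [NormedAddCommGroup V] [InnerProductSpace ℝ V]
    (τ T : V →ₗ[ℝ] Ω → ℝ × ℝ) (a : V →ₗ[ℝ] V →ₗ[ℝ] ℝ) (L : V →ₗ[ℝ] ℝ)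
    (v : V) (μ : Ω → ℝ × ℝ) :
    stabilizedLagrangian m γ τ T a L g v μ
      = (1 / 2) * a v v - L v + PP m μ (τ v) - GG m g μ
        - (1 / 2) * BB m γ (μ + T v) (μ + T v) := by
  have e : (∫ ω, γ ω * (((μ ω).1 + (T v ω).1) ^ 2 + ((μ ω).2 + (T v ω).2) ^ 2) ∂m)
      = BB m γ (μ + T v) (μ + T v) := by
    refine integral_congr_ae (.of_forall fun ω => ?_)
    simp only [Pi.add_apply, Prod.fst_add, Prod.snd_add]
    ring
  simp only [stabilizedLagrangian, PP, GG, e]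

end SaddleAux

open SaddleAux

/-- Saddle point characterization of the abstract stabilized mixed problem: with `a`
symmetric, `M` convex and the stabilized coercivity assumption, `(u, λ)` solves the mixed
problem (i)–(ii) iff it is a saddle point of the stabilized Lagrangian `L_γ`. -/
theorem stabilized_mixed_saddle_point
    {Ω : Type*} [MeasurableSpace Ω] (m : Measure Ω)
    (γ : Ω → ℝ) (hγ : MemLp γ ⊤ m) (hγpos : ∀ᵐ ω ∂m, 0 < γ ω)
    {V : Type*} [NormedAddCommGroup V] [InnerProductSpace ℝ V]
    (τ T : V →ₗ[ℝ] Ω → ℝ × ℝ)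
    (hτ : ∀ v : V, MemLp (τ v) 2 m) (hT : ∀ v : V, MemLp (T v) 2 m)
    (a : V →ₗ[ℝ] V →ₗ[ℝ] ℝ) (hsymm : ∀ v w : V, a v w = a w v)
    (L : V →ₗ[ℝ] ℝ) (g : Ω → ℝ) (hg : MemLp g 2 m)
    (M : Set (Ω → ℝ × ℝ)) (hM : ∀ μ ∈ M, MemLp μ 2 m) (hMconv : Convex ℝ M)
    (α : ℝ) (hα : 0 < α)
    (hcoer : ∀ v : V,
      α * ‖v‖ ^ 2 ≤ a v v - ∫ ω, γ ω * ((T v ω).1 ^ 2 + (T v ω).2 ^ 2) ∂m)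
    (u : V) (l : Ω → ℝ × ℝ) (hl : l ∈ M) :
    ((∀ v : V,
        a u v + (∫ ω, ((l ω).1 * (τ v ω).1 + (l ω).2 * (τ v ω).2) ∂m)
          - (∫ ω, γ ω * (((l ω).1 + (T u ω).1) * (T v ω).1
              + ((l ω).2 + (T u ω).2) * (T v ω).2) ∂m) = L v) ∧
      (∀ μ ∈ M,
        (∫ ω, (((μ ω).1 - (l ω).1) * (τ u ω).1
            + ((μ ω).2 - (l ω).2) * (τ u ω).2) ∂m)
          - (∫ ω, γ ω * (((μ ω).1 - (l ω).1) * ((l ω).1 + (T u ω).1)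
              + ((μ ω).2 - (l ω).2) * ((l ω).2 + (T u ω).2)) ∂m)
        ≤ ∫ ω, g ω * ((μ ω).1 - (l ω).1) ∂m))
    ↔ ((∀ μ ∈ M, stabilizedLagrangian m γ τ T a L g u μ
          ≤ stabilizedLagrangian m γ τ T a L g u l) ∧
       (∀ v : V, stabilizedLagrangian m γ τ T a L g u l
          ≤ stabilizedLagrangian m γ τ T a L g v l)) := by
  classical
  have hl2 : MemLp l 2 m := hM l hl
  have hTu : MemLp (T u) 2 m := hT u
  have hτu : MemLp (τ u) 2 m := hτ u
  have hlTu : MemLp (l + T u) 2 m := hl2.add hTu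
  set Lg := stabilizedLagrangian m γ τ T a L g with hLg
  -- conversion of the statement integrals to `PP`/`BB`/`GG`
  have conv1 : ∀ v : V,
      (∫ ω, γ ω * (((l ω).1 + (T u ω).1) * (T v ω).1
          + ((l ω).2 + (T u ω).2) * (T v ω).2) ∂m) = BB m γ (l + T u) (T v) := by
    intro v
    refine (integral_congr_ae (.of_forall fun ω => ?_)).symm
    simp only [Pi.add_apply, Prod.fst_add, Prod.snd_add]
  have conv0 : ∀ v : V,
      (∫ ω, ((l ω).1 * (τ v ω).1 + (l ω).2 * (τ v ω).2) ∂m) = PP m l (τ v) :=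
    fun _ => rfl
  have conv2 : ∀ μ : Ω → ℝ × ℝ,
      (∫ ω, (((μ ω).1 - (l ω).1) * (τ u ω).1
          + ((μ ω).2 - (l ω).2) * (τ u ω).2) ∂m) = PP m (μ - l) (τ u) := by
    intro μ
    refine (integral_congr_ae (.of_forall fun ω => ?_)).symm
    simp only [Pi.sub_apply, Prod.fst_sub, Prod.snd_sub]
  have conv3 : ∀ μ : Ω → ℝ × ℝ,
      (∫ ω, γ ω * (((μ ω).1 - (l ω).1) * ((l ω).1 + (T u ω).1)
          + ((μ ω).2 - (l ω).2) * ((l ω).2 + (T u ω).2)) ∂m)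
        = BB m γ (μ - l) (l + T u) := by
    intro μ
    refine (integral_congr_ae (.of_forall fun ω => ?_)).symm
    simp only [Pi.sub_apply, Pi.add_apply, Prod.fst_sub, Prod.snd_sub,
      Prod.fst_add, Prod.snd_add]
  have conv4 : ∀ μ : Ω → ℝ × ℝ,
      (∫ ω, g ω * ((μ ω).1 - (l ω).1) ∂m) = GG m g (μ - l) := by
    intro μ
    refine (integral_congr_ae (.of_forall fun ω => ?_)).symm
    simp only [Pi.sub_apply, Prod.fst_sub]
  -- the coercivity in `BB` language
  have hcoer' : ∀ w : V, α * ‖w‖ ^ 2 ≤ a w w - BB m γ (T w) (T w) := by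
    intro w
    have := hcoer w
    rwa [← BB_self_eq] at this
  -- key identity A
  have keyA : ∀ μ : Ω → ℝ × ℝ, MemLp μ 2 m →
      Lg u l - Lg u μ
        = -(PP m (μ - l) (τ u) - BB m γ (μ - l) (l + T u) - GG m g (μ - l))
          + (1 / 2) * BB m γ (μ - l) (μ - l) := by
    intro μ hμ
    rw [hLg, lag_eq, lag_eq]
    have hx : μ + T u = (l + T u) + (μ - l) := by abel
    rw [hx, BB_quad hγ hlTu (hμ.sub hl2)]
    have h1 : PP m (μ - l) (τ u) = PP m μ (τ u) - PP m l (τ u) :=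
      PP_sub_left hμ hl2 hτu
    have h2 : GG m g (μ - l) = GG m g μ - GG m g l := GG_sub hg hμ hl2
    have h3 : BB m γ (l + T u) (μ - l) = BB m γ (μ - l) (l + T u) := BB_symm
    linarith [h1, h2, h3]
  -- key identity B
  have keyB : ∀ v : V,
      Lg v l - Lg u l
        = (a u (v - u) + PP m l (τ (v - u)) - BB m γ (l + T u) (T (v - u)) - L (v - u))
          + (1 / 2) * (a (v - u) (v - u) - BB m γ (T (v - u)) (T (v - u))) := by
    intro v
    set w := v - u with hwdef
    have hv : v = u + w := by rw [hwdef]; abel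
    rw [hLg, lag_eq, lag_eq]
    have hτv : τ v = τ u + τ w := by rw [hv, _root_.map_add]
    have hTv : T v = T u + T w := by rw [hv, _root_.map_add]
    have hx : l + T v = (l + T u) + T w := by rw [hTv]; abel
    rw [hx, BB_quad hγ hlTu (hT w), hτv, PP_add_right hl2 hτu (hτ w)]
    have ha : a v v = a u u + 2 * a u w + a w w := by
      rw [hv]
      simp only [_root_.map_add, LinearMap.add_apply]
      rw [hsymm w u]
      ring
    have hLv : L v = L u + L w := by rw [hv, _root_.map_add]
    rw [ha, hLv]
    ring
  -- E is linear under scalar multiplication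
  have Esmul : ∀ (t : ℝ) (x : V),
      a u (t • x) + PP m l (τ (t • x)) - BB m γ (l + T u) (T (t • x)) - L (t • x)
        = t * (a u x + PP m l (τ x) - BB m γ (l + T u) (T x) - L x) := by
    intro t x
    rw [_root_.map_smul, _root_.map_smul, _root_.map_smul, _root_.map_smul,
      PP_smul_right, BB_smul_right]
    simp only [smul_eq_mul]
    ring
  constructor
  · rintro ⟨hi, hii⟩
    have hii' : ∀ μ ∈ M,
        PP m (μ - l) (τ u) - BB m γ (μ - l) (l + T u) - GG m g (μ - l) ≤ 0 := by
      intro μ hμ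
      have h := hii μ hμ
      rw [conv2 μ, conv3 μ, conv4 μ] at h
      linarith
    constructor
    · intro μ hμ
      have h := keyA μ (hM μ hμ)
      have hD := hii' μ hμ
      have hB := BB_nonneg (γ := γ) hγpos (μ - l)
      linarith
    · intro v
      have h := keyB v
      have hE := hi (v - u)
      rw [conv1 (v - u), conv0 (v - u)] at hE
      have hc := hcoer' (v - u)
      have hn : (0 : ℝ) ≤ α * ‖v - u‖ ^ 2 := by positivity
      linarith
  · rintro ⟨hA, hB⟩
    -- E vanishes
    have hEzero : ∀ x : V,
        a u x + PP m l (τ x) - BB m γ (l + T u) (T x) - L x = 0 := by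
      intro x
      by_cases hx0 : x = 0
      · subst hx0
        simp only [_root_.map_zero, PP_zero_right, BB_zero_right, LinearMap.map_zero]
        ring
      · set c := a u x + PP m l (τ x) - BB m γ (l + T u) (T x) - L x with hc
        set q := a x x - BB m γ (T x) (T x) with hq
        have hqpos : 0 < q := by
          have h1 := hcoer' x
          have h2 : 0 < α * ‖x‖ ^ 2 := by
            have : 0 < ‖x‖ := norm_pos_iff.mpr hx0
            positivity
          linarith
        have key : ∀ t : ℝ, 0 ≤ t * c + 1 / 2 * (t * (t * q)) := by
          intro t
          have h1 := hB (u + t • x)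
          have h2 := keyB (u + t • x)
          have hd : u + t • x - u = t • x := by abel
          rw [hd] at h2
          have h3 : a (t • x) (t • x) = t * (t * a x x) := by
            simp only [_root_.map_smul, LinearMap.smul_apply, smul_eq_mul]
            try ring
          have h4 : BB m γ (T (t • x)) (T (t • x)) = t * (t * BB m γ (T x) (T x)) := by
            rw [_root_.map_smul, BB_smul_left, BB_smul_right]
          rw [h3, h4, Esmul t x] at h2
          have h5 : 0 ≤ Lg (u + t • x) l - Lg u l := by linarith
          rw [h2] at h5
          rw [hc, hq]
          linarith [h5]
        have h1 := key (-(c / q))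
        have e : (-(c / q)) * c + 1 / 2 * ((-(c / q)) * ((-(c / q)) * q))
            = -(c ^ 2 / (2 * q)) := by
          field_simp
          ring
        rw [e] at h1
        have h2 : c ^ 2 / (2 * q) ≤ 0 := by linarith
        have h3 : c ^ 2 ≤ 0 := by
          rcases div_nonpos_iff.mp h2 with ⟨_, hb⟩ | ⟨hc2, _⟩
          · nlinarith
          · exact hc2
        have : c = 0 := by
          have h4 : c ^ 2 = 0 := le_antisymm h3 (sq_nonneg c)
          exact sq_eq_zero_iff.mp h4
        exact this
    constructor
    · intro v
      have h := hEzero v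
      rw [conv1 v, conv0 v]
      linarith
    · intro μ hμ
      rw [conv2 μ, conv3 μ, conv4 μ]
      set D := PP m (μ - l) (τ u) - BB m γ (μ - l) (l + T u) - GG m g (μ - l) with hD
      set Q := BB m γ (μ - l) (μ - l) with hQ
      have hQ0 : 0 ≤ Q := BB_nonneg hγpos (μ - l)
      have hstep : ∀ t : ℝ, 0 < t → t ≤ 1 → t * D ≤ t ^ 2 / 2 * Q := by
        intro t ht0 ht1
        have hmem : l + t • (μ - l) ∈ M := by
          have h1 : (1 - t) • l + t • μ ∈ M :=
            hMconv hl hμ (by linarith) ht0.le (by ring)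
          have h2 : l + t • (μ - l) = (1 - t) • l + t • μ := by
            rw [sub_smul, one_smul, smul_sub]
            abel
          rw [h2]
          exact h1
        have hμt : MemLp (l + t • (μ - l)) 2 m := hM _ hmem
        have h3 := keyA (l + t • (μ - l)) hμt
        have hd : l + t • (μ - l) - l = t • (μ - l) := by abel
        rw [hd, PP_smul_left, BB_smul_left, GG_smul, BB_smul_right, BB_smul_left] at h3
        have h4 : Lg u (l + t • (μ - l)) ≤ Lg u l := hA _ hmem
        rw [hD, hQ]
        nlinarith [h3, h4]
      have hfin : ∀ ε : ℝ, 0 < ε → D ≤ ε := by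
        intro ε hε
        set t := min 1 (ε / (Q + 1)) with ht
        have ht0 : 0 < t := lt_min one_pos (by positivity)
        have ht1 : t ≤ 1 := min_le_left _ _
        have h5 : t * (Q + 1) ≤ ε := by
          have := min_le_right 1 (ε / (Q + 1))
          rw [le_div_iff₀ (by positivity)] at this
          exact this
        have h6 := hstep t ht0 ht1
        have h7 : D ≤ t / 2 * Q := by nlinarith [h6, ht0]
        nlinarith [h7, ht0, hQ0, h5]
      by_contra hcon
      push_neg at hcon
      have := hfin (D / 2) (by linarith)
      linarith
end

section
/- Stability corollary for nonnegative multiplier and gap: under the hypotheses of the abstract stability estimate (stabilized coercivity with α > 0; (u, λ) solves (i)–(ii); (0, λ_t), (2λ_n, λ_t), (λ_n, 0) ∈ M; |L(v)| ≤ C₀ ‖v‖_V for all v), if in addition λ_n ≥ 0 almost everywhere and g ≥ 0 almost everywhere on Ω, then α ‖u‖_V² + ∫_Ω γ |λ|² dm ≤ C₀ ‖u‖_V. -/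
open MeasureTheory

/-- Stability corollary for nonnegative multiplier and gap: under the hypotheses of the
abstract stability estimate, if additionally `λₙ ≥ 0` a.e. and `g ≥ 0` a.e. on `Ω`, then
`α ‖u‖² + ∫ γ |λ|² dm ≤ C₀ ‖u‖`. -/
theorem stabilized_mixed_stability_nonneg
    {Ω : Type*} [MeasurableSpace Ω] (m : Measure Ω)
    (γ : Ω → ℝ) (hγ : MemLp γ ⊤ m) (hγpos : ∀ᵐ ω ∂m, 0 < γ ω)
    {V : Type*} [NormedAddCommGroup V] [InnerProductSpace ℝ V]
    (τ T : V →ₗ[ℝ] Ω → ℝ × ℝ)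
    (hτ : ∀ v : V, MemLp (τ v) 2 m) (hT : ∀ v : V, MemLp (T v) 2 m)
    (a : V →ₗ[ℝ] V →ₗ[ℝ] ℝ) (L : V →ₗ[ℝ] ℝ)
    (g : Ω → ℝ) (hg : MemLp g 2 m)
    (M : Set (Ω → ℝ × ℝ)) (hM : ∀ μ ∈ M, MemLp μ 2 m)
    (α : ℝ) (hα : 0 < α)
    (hcoer : ∀ v : V,
      α * ‖v‖ ^ 2 ≤ a v v - ∫ ω, γ ω * ((T v ω).1 ^ 2 + (T v ω).2 ^ 2) ∂m)
    (u : V) (l : Ω → ℝ × ℝ) (hl : l ∈ M)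
    (heq : ∀ v : V,
      a u v + (∫ ω, ((l ω).1 * (τ v ω).1 + (l ω).2 * (τ v ω).2) ∂m)
        - (∫ ω, γ ω * (((l ω).1 + (T u ω).1) * (T v ω).1
            + ((l ω).2 + (T u ω).2) * (T v ω).2) ∂m) = L v)
    (hineq : ∀ μ ∈ M,
      (∫ ω, (((μ ω).1 - (l ω).1) * (τ u ω).1
          + ((μ ω).2 - (l ω).2) * (τ u ω).2) ∂m)
        - (∫ ω, γ ω * (((μ ω).1 - (l ω).1) * ((l ω).1 + (T u ω).1)
            + ((μ ω).2 - (l ω).2) * ((l ω).2 + (T u ω).2)) ∂m)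
      ≤ ∫ ω, g ω * ((μ ω).1 - (l ω).1) ∂m)
    (hmod₁ : (fun ω => ((0 : ℝ), (l ω).2)) ∈ M)
    (hmod₂ : (fun ω => (2 * (l ω).1, (l ω).2)) ∈ M)
    (hmod₃ : (fun ω => ((l ω).1, (0 : ℝ))) ∈ M)
    (C₀ : ℝ) (hC₀ : 0 ≤ C₀) (hL : ∀ v : V, |L v| ≤ C₀ * ‖v‖)
    (hlpos : ∀ᵐ ω ∂m, 0 ≤ (l ω).1) (hgpos : ∀ᵐ ω ∂m, 0 ≤ g ω) :
    α * ‖u‖ ^ 2 + (∫ ω, γ ω * ((l ω).1 ^ 2 + (l ω).2 ^ 2) ∂m)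
      ≤ C₀ * ‖u‖ := by
  classical
  -- products of two L² functions are integrable
  have hmul : ∀ {f h : Ω → ℝ}, MemLp f 2 m → MemLp h 2 m →
      Integrable (fun ω => f ω * h ω) m := by
    intro f h hf hh
    have h1 : MemLp (f • h) 1 m := hh.smul hf
    have := memLp_one_iff_integrable.mp h1
    simpa [Pi.smul_apply, smul_eq_mul, Pi.mul_def] using this
  -- γ times an integrable function is integrable
  have γmul : ∀ {h : Ω → ℝ}, Integrable h m →
      Integrable (fun ω => γ ω * h ω) m := by
    intro h hh
    have h1 : MemLp (γ • h) 1 m := memLp_one_iff_integrable.mpr (hh.smul_of_top_right hγ)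
    have := memLp_one_iff_integrable.mp h1
    simpa [Pi.smul_apply, smul_eq_mul, Pi.mul_def] using this
  -- component memℒp facts
  have hl2' := hM l hl
  have hl1 : MemLp (fun ω => (l ω).1) 2 m := by
    simpa [Function.comp_def] using (ContinuousLinearMap.fst ℝ ℝ ℝ).comp_memLp' hl2'
  have hl2 : MemLp (fun ω => (l ω).2) 2 m := by
    simpa [Function.comp_def] using (ContinuousLinearMap.snd ℝ ℝ ℝ).comp_memLp' hl2'
  have htu1 : MemLp (fun ω => (τ u ω).1) 2 m := by
    simpa [Function.comp_def] using (ContinuousLinearMap.fst ℝ ℝ ℝ).comp_memLp' (hτ u)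
  have htu2 : MemLp (fun ω => (τ u ω).2) 2 m := by
    simpa [Function.comp_def] using (ContinuousLinearMap.snd ℝ ℝ ℝ).comp_memLp' (hτ u)
  have hTu1 : MemLp (fun ω => (T u ω).1) 2 m := by
    simpa [Function.comp_def] using (ContinuousLinearMap.fst ℝ ℝ ℝ).comp_memLp' (hT u)
  have hTu2 : MemLp (fun ω => (T u ω).2) 2 m := by
    simpa [Function.comp_def] using (ContinuousLinearMap.snd ℝ ℝ ℝ).comp_memLp' (hT u)
  -- integrability of all relevant integrands
  have iA1 : Integrable (fun ω => (l ω).1 * (τ u ω).1) m := hmul hl1 htu1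
  have iA2 : Integrable (fun ω => (l ω).2 * (τ u ω).2) m := hmul hl2 htu2
  have iF1 : Integrable (fun ω => γ ω * ((l ω).1 * ((l ω).1 + (T u ω).1))) m :=
    γmul (hmul hl1 (hl1.add hTu1))
  have iF2 : Integrable (fun ω => γ ω * ((l ω).2 * ((l ω).2 + (T u ω).2))) m :=
    γmul (hmul hl2 (hl2.add hTu2))
  have iF3 : Integrable (fun ω => γ ω * (((l ω).1 + (T u ω).1) * (T u ω).1
      + ((l ω).2 + (T u ω).2) * (T u ω).2)) m :=
    γmul ((hmul (hl1.add hTu1) hTu1).add (hmul (hl2.add hTu2) hTu2))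
  have iF4 : Integrable (fun ω => γ ω * ((l ω).1 ^ 2 + (l ω).2 ^ 2)) m := by
    simpa only [pow_two, Pi.add_apply] using γmul ((hmul hl1 hl1).add (hmul hl2 hl2))
  have iF5 : Integrable (fun ω => γ ω * ((T u ω).1 ^ 2 + (T u ω).2 ^ 2)) m := by
    simpa only [pow_two, Pi.add_apply] using γmul ((hmul hTu1 hTu1).add (hmul hTu2 hTu2))
  -- abbreviations
  set An := ∫ ω, (l ω).1 * (τ u ω).1 ∂m with hAn_def
  set At := ∫ ω, (l ω).2 * (τ u ω).2 ∂m with hAt_def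
  set Bn := ∫ ω, γ ω * ((l ω).1 * ((l ω).1 + (T u ω).1)) ∂m with hBn_def
  set Bt := ∫ ω, γ ω * ((l ω).2 * ((l ω).2 + (T u ω).2)) ∂m with hBt_def
  set G := ∫ ω, g ω * (l ω).1 ∂m with hG_def
  set I3 := ∫ ω, γ ω * (((l ω).1 + (T u ω).1) * (T u ω).1
      + ((l ω).2 + (T u ω).2) * (T u ω).2) ∂m with hI3_def
  set I4 := ∫ ω, γ ω * ((l ω).1 ^ 2 + (l ω).2 ^ 2) ∂m with hI4_def
  set I5 := ∫ ω, γ ω * ((T u ω).1 ^ 2 + (T u ω).2 ^ 2) ∂m with hI5_def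
  -- from the variational inequality with μ = (2 λₙ, λₜ)
  have h2 := hineq _ hmod₂
  have e2a : ∀ ω : Ω, (2 * (l ω).1 - (l ω).1) * (τ u ω).1
      + ((l ω).2 - (l ω).2) * (τ u ω).2 = (l ω).1 * (τ u ω).1 := fun ω => by ring
  have e2b : ∀ ω : Ω, γ ω * ((2 * (l ω).1 - (l ω).1) * ((l ω).1 + (T u ω).1)
      + ((l ω).2 - (l ω).2) * ((l ω).2 + (T u ω).2))
      = γ ω * ((l ω).1 * ((l ω).1 + (T u ω).1)) := fun ω => by ring
  have e2c : ∀ ω : Ω, g ω * (2 * (l ω).1 - (l ω).1) = g ω * (l ω).1 := fun ω => by ring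
  simp only [e2a, e2b, e2c] at h2
  -- from the variational inequality with μ = (0, λₜ)
  have h1 := hineq _ hmod₁
  have e1a : ∀ ω : Ω, ((0 : ℝ) - (l ω).1) * (τ u ω).1
      + ((l ω).2 - (l ω).2) * (τ u ω).2 = -((l ω).1 * (τ u ω).1) := fun ω => by ring
  have e1b : ∀ ω : Ω, γ ω * (((0 : ℝ) - (l ω).1) * ((l ω).1 + (T u ω).1)
      + ((l ω).2 - (l ω).2) * ((l ω).2 + (T u ω).2))
      = -(γ ω * ((l ω).1 * ((l ω).1 + (T u ω).1))) := fun ω => by ring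
  have e1c : ∀ ω : Ω, g ω * ((0 : ℝ) - (l ω).1) = -(g ω * (l ω).1) := fun ω => by ring
  simp only [e1a, e1b, e1c, integral_neg] at h1
  -- from the variational inequality with μ = (λₙ, 0)
  have h3 := hineq _ hmod₃
  have e3a : ∀ ω : Ω, ((l ω).1 - (l ω).1) * (τ u ω).1
      + ((0 : ℝ) - (l ω).2) * (τ u ω).2 = -((l ω).2 * (τ u ω).2) := fun ω => by ring
  have e3b : ∀ ω : Ω, γ ω * (((l ω).1 - (l ω).1) * ((l ω).1 + (T u ω).1)
      + ((0 : ℝ) - (l ω).2) * ((l ω).2 + (T u ω).2))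
      = -(γ ω * ((l ω).2 * ((l ω).2 + (T u ω).2))) := fun ω => by ring
  have e3c : ∀ ω : Ω, g ω * ((l ω).1 - (l ω).1) = 0 := fun ω => by ring
  simp only [e3a, e3b, e3c, integral_neg, integral_zero] at h3
  -- G ≥ 0
  have hG : 0 ≤ G := by
    apply integral_nonneg_of_ae
    filter_upwards [hlpos, hgpos] with ω h1 h2
    exact mul_nonneg h2 h1
  -- the variational equation at v = u
  have hequ := heq u
  rw [integral_add iA1 iA2] at hequ
  -- combining the weighted integrals
  have iF12 : Integrable (fun ω => γ ω * ((l ω).1 * ((l ω).1 + (T u ω).1))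
      + γ ω * ((l ω).2 * ((l ω).2 + (T u ω).2))) m := iF1.add iF2
  have key : Bn + Bt - I3 = I4 - I5 := by
    have hE1 : (∫ ω, (γ ω * ((l ω).1 * ((l ω).1 + (T u ω).1))
        + γ ω * ((l ω).2 * ((l ω).2 + (T u ω).2))
        - γ ω * (((l ω).1 + (T u ω).1) * (T u ω).1
            + ((l ω).2 + (T u ω).2) * (T u ω).2)) ∂m) = Bn + Bt - I3 := by
      rw [integral_sub iF12 iF3, integral_add iF1 iF2]
    have hE2 : (∫ ω, (γ ω * ((l ω).1 ^ 2 + (l ω).2 ^ 2)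
        - γ ω * ((T u ω).1 ^ 2 + (T u ω).2 ^ 2)) ∂m) = I4 - I5 := integral_sub iF4 iF5
    rw [← hE1, ← hE2]
    exact integral_congr_ae (Filter.Eventually.of_forall fun ω => by ring)
  have hco := hcoer u
  have hLu : L u ≤ C₀ * ‖u‖ := le_trans (le_abs_self _) (hL u)
  linarith
end

section
/- A posteriori estimate for the normal contact terms: let (Ω, m) be a measure space and λ_n, λ_n^h, u_n, u_n^h, g ∈ L²(Ω, m) real-valued. Assume λ_n ≥ 0 a.e., u_n ≤ g a.e., and ∫_Ω λ_n (u_n − g) dm = 0. Then ∫_Ω (λ_n − λ_n^h)(u_n^h − u_n) dm ≤ ∫_Ω (λ_n^h)⁺ (g − u_n^h)⁺ dm + ∫_Ω (λ_n^h − λ_n)(g − u_n^h)⁻ dm − ∫_Ω (λ_n^h)⁻ (u_n^h − u_n) dm, where v⁺ = max{v, 0} and v⁻ = min{v, 0}, so that v = v⁺ + v⁻. -/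
open MeasureTheory
open scoped ENNReal

private lemma l2_mul_integrable {Ω : Type*} [MeasurableSpace Ω] {m : Measure Ω}
    {f h : Ω → ℝ} (hf : MemLp f 2 m) (hh : MemLp h 2 m) :
    Integrable (fun ω => f ω * h ω) m := by
  have h12 : (1 : ℝ≥0∞) / 1 = 1 / 2 + 1 / 2 := by
    simp only [one_div, inv_one]
    rw [ENNReal.inv_two_add_inv_two]
  have hmem : MemLp (h • f) 1 m := hf.smul hh
  have hint : Integrable (fun ω => h ω * f ω) m := memLp_one_iff_integrable.mp hmem
  simpa [mul_comm] using hint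

private lemma memℒp_max_zero {Ω : Type*} [MeasurableSpace Ω] {m : Measure Ω}
    {f : Ω → ℝ} (hf : MemLp f 2 m) : MemLp (fun ω => max (f ω) 0) 2 m := by
  simpa [Pi.sup_def] using hf.sup (MemLp.zero (p := 2) (μ := m) (ε := ℝ))

private lemma memℒp_min_zero {Ω : Type*} [MeasurableSpace Ω] {m : Measure Ω}
    {f : Ω → ℝ} (hf : MemLp f 2 m) : MemLp (fun ω => min (f ω) 0) 2 m := by
  simpa [Pi.inf_def] using hf.inf (MemLp.zero (p := 2) (μ := m) (ε := ℝ))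

/-- A posteriori estimate for the normal contact terms: if `λₙ ≥ 0` a.e., `uₙ ≤ g` a.e. and
`∫ λₙ (uₙ − g) dm = 0`, then
`∫ (λₙ − λₙʰ)(uₙʰ − uₙ) ≤ ∫ (λₙʰ)⁺ (g − uₙʰ)⁺ + ∫ (λₙʰ − λₙ)(g − uₙʰ)⁻ − ∫ (λₙʰ)⁻ (uₙʰ − uₙ)`,
where `v⁺ = max v 0` and `v⁻ = min v 0`. -/
theorem aposteriori_normal_contact
    {Ω : Type*} [MeasurableSpace Ω] (m : Measure Ω)
    (ln lnh un unh g : Ω → ℝ)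
    (hln : MemLp ln 2 m) (hlnh : MemLp lnh 2 m) (hun : MemLp un 2 m)
    (hunh : MemLp unh 2 m) (hg : MemLp g 2 m)
    (hln_nonneg : ∀ᵐ ω ∂m, 0 ≤ ln ω)
    (hun_le : ∀ᵐ ω ∂m, un ω ≤ g ω)
    (hcompl : ∫ ω, ln ω * (un ω - g ω) ∂m = 0) :
    ∫ ω, (ln ω - lnh ω) * (unh ω - un ω) ∂m
      ≤ (∫ ω, max (lnh ω) 0 * max (g ω - unh ω) 0 ∂m)
        + (∫ ω, (lnh ω - ln ω) * min (g ω - unh ω) 0 ∂m)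
        - (∫ ω, min (lnh ω) 0 * (unh ω - un ω) ∂m) := by
  -- notation
  set a : Ω → ℝ := fun ω => max (lnh ω) 0 with ha
  set b : Ω → ℝ := fun ω => min (lnh ω) 0 with hb
  set p : Ω → ℝ := fun ω => max (g ω - unh ω) 0 with hp
  set q : Ω → ℝ := fun ω => min (g ω - unh ω) 0 with hq
  -- Memℒp facts
  have hgu : MemLp (fun ω => g ω - unh ω) 2 m := hg.sub hunh
  have hgun : MemLp (fun ω => g ω - un ω) 2 m := hg.sub hun
  have hlsub : MemLp (fun ω => ln ω - lnh ω) 2 m := hln.sub hlnh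
  have hlsub' : MemLp (fun ω => lnh ω - ln ω) 2 m := hlnh.sub hln
  have husub : MemLp (fun ω => unh ω - un ω) 2 m := hunh.sub hun
  have hA : MemLp a 2 m := memℒp_max_zero hlnh
  have hB : MemLp b 2 m := memℒp_min_zero hlnh
  have hP : MemLp p 2 m := memℒp_max_zero hgu
  have hQ : MemLp q 2 m := memℒp_min_zero hgu
  -- integrability of all products
  have iA : Integrable (fun ω => a ω * p ω) m := l2_mul_integrable hA hP
  have iB : Integrable (fun ω => (lnh ω - ln ω) * q ω) m := l2_mul_integrable hlsub' hQ
  have iC : Integrable (fun ω => b ω * (unh ω - un ω)) m := l2_mul_integrable hB husub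
  have iD : Integrable (fun ω => (ln ω - lnh ω) * (unh ω - un ω)) m :=
    l2_mul_integrable hlsub husub
  have i1 : Integrable (fun ω => ln ω * p ω) m := l2_mul_integrable hln hP
  have i2 : Integrable (fun ω => b ω * q ω) m := l2_mul_integrable hB hQ
  have i3 : Integrable (fun ω => a ω * (g ω - un ω)) m := l2_mul_integrable hA hgun
  have i4 : Integrable (fun ω => ln ω * (g ω - un ω)) m := l2_mul_integrable hln hgun
  -- pointwise key identity
  have key : ∀ ω,
      a ω * p ω + (lnh ω - ln ω) * q ω - b ω * (unh ω - un ω)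
        - (ln ω - lnh ω) * (unh ω - un ω)
      = ln ω * p ω + b ω * q ω + a ω * (g ω - un ω) - ln ω * (g ω - un ω) := by
    intro ω
    have h1 : a ω + b ω = lnh ω := by
      show max (lnh ω) 0 + min (lnh ω) 0 = lnh ω
      simpa using max_add_min (lnh ω) 0
    have h2 : p ω + q ω = g ω - unh ω := by
      show max (g ω - unh ω) 0 + min (g ω - unh ω) 0 = g ω - unh ω
      simpa using max_add_min (g ω - unh ω) 0
    linear_combination (-(q ω + unh ω - un ω)) * h1 + (a ω - ln ω) * h2
  -- the combined equality of integrals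
  have comb :
      (∫ ω, a ω * p ω ∂m) + (∫ ω, (lnh ω - ln ω) * q ω ∂m)
        - (∫ ω, b ω * (unh ω - un ω) ∂m)
        - (∫ ω, (ln ω - lnh ω) * (unh ω - un ω) ∂m)
      = (∫ ω, ln ω * p ω ∂m) + (∫ ω, b ω * q ω ∂m)
        + (∫ ω, a ω * (g ω - un ω) ∂m) - (∫ ω, ln ω * (g ω - un ω) ∂m) := by
    have iAB : Integrable (fun ω => a ω * p ω + (lnh ω - ln ω) * q ω) m := iA.add iB
    have iABC : Integrable
        (fun ω => a ω * p ω + (lnh ω - ln ω) * q ω - b ω * (unh ω - un ω)) m := iAB.sub iC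
    have i12 : Integrable (fun ω => ln ω * p ω + b ω * q ω) m := i1.add i2
    have i123 : Integrable
        (fun ω => ln ω * p ω + b ω * q ω + a ω * (g ω - un ω)) m := i12.add i3
    rw [← integral_add iA iB, ← integral_sub iAB iC, ← integral_sub iABC iD,
      ← integral_add i1 i2, ← integral_add i12 i3, ← integral_sub i123 i4]
    exact integral_congr_ae (Filter.Eventually.of_forall fun ω => key ω)
  -- the complementarity term vanishes
  have hI4 : ∫ ω, ln ω * (g ω - un ω) ∂m = 0 := by
    have he : (fun ω => ln ω * (g ω - un ω)) = fun ω => -(ln ω * (un ω - g ω)) := by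
      funext ω; ring
    rw [he, integral_neg, hcompl, neg_zero]
  -- the remaining three terms are nonnegative
  have n1 : 0 ≤ ∫ ω, ln ω * p ω ∂m := by
    refine integral_nonneg_of_ae ?_
    filter_upwards [hln_nonneg] with ω hω
    exact mul_nonneg hω (le_max_right _ _)
  have n2 : 0 ≤ ∫ ω, b ω * q ω ∂m := by
    refine integral_nonneg_of_ae ?_
    filter_upwards with ω
    simp only [Pi.zero_apply]
    nlinarith [min_le_right (lnh ω) (0:ℝ), min_le_right (g ω - unh ω) (0:ℝ)]
  have n3 : 0 ≤ ∫ ω, a ω * (g ω - un ω) ∂m := by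
    refine integral_nonneg_of_ae ?_
    filter_upwards [hun_le] with ω hω
    exact mul_nonneg (le_max_right _ _) (by linarith)
  linarith [comb, hI4, n1, n2, n3]
end
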